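/- Let P and Q be probability measures on a measurable space X, let μ > 0, let f* ∈ L²(P) ∩ L¹(Q) with Var_P[f*] > 0, and let R* be the signed measure with dR*/dP = 1 + (μ/2)(f* − E_P[f*]). Set δ := E_Q[f*] − E_P[f*] − (μ/2)·Var_P[f*]. Then ∫ (dR*/dP)² dP = 1 + (E_Q[f*] − E_P[f*] − δ)² / Var_P[f*]. Moreover, if F is a convex symmetric subset of L²(P) ∩ L¹(Q) and f* attains the supremum over f ∈ F of { E_Q[f] − E_P[f] − (μ/4)·Var_P[f] }, then for every f₀ ∈ F, |∫ f₀ dQ − ∫ f₀ dR*| ≤ δ. -/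

import Mathlib

open MeasureTheory

lemma my_integrable_mul {X : Type*} [MeasurableSpace X] {P : Measure X} {f g : X → ℝ}
    (hf : MemLp f 2 P) (hg : MemLp g 2 P) : Integrable (fun x => f x * g x) P := by
  have h : MemLp (g • f) 1 P := hf.smul hg (hpqr := ⟨by
    rw [inv_one, ← two_mul]
    exact ENNReal.mul_inv_cancel two_ne_zero ENNReal.ofNat_ne_top⟩)
  have := memLp_one_iff_integrable.mp h
  exact (by simpa [Pi.smul_apply, smul_eq_mul, mul_comm] using this : Integrable (f * g) P)

lemma my_integral_comb {X : Type*} [MeasurableSpace X] (P : Measure X) [IsProbabilityMeasure P]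
    (u1 u2 u3 u4 u5 : X → ℝ) (h1 : Integrable u1 P) (h2 : Integrable u2 P)
    (h3 : Integrable u3 P) (h4 : Integrable u4 P) (h5 : Integrable u5 P)
    (c1 c2 c3 c4 c5 c0 : ℝ) :
    ∫ x, (c1 * u1 x + (c2 * u2 x + (c3 * u3 x + (c4 * u4 x + (c5 * u5 x + c0))))) ∂P
      = c1 * (∫ x, u1 x ∂P) + (c2 * (∫ x, u2 x ∂P) + (c3 * (∫ x, u3 x ∂P)
        + (c4 * (∫ x, u4 x ∂P) + (c5 * (∫ x, u5 x ∂P) + c0)))) := by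
  have t5 : Integrable (fun x => c5 * u5 x + c0) P := (h5.const_mul _).add (integrable_const _)
  have t4 : Integrable (fun x => c4 * u4 x + (c5 * u5 x + c0)) P := (h4.const_mul _).add t5
  have t3 : Integrable (fun x => c3 * u3 x + (c4 * u4 x + (c5 * u5 x + c0))) P :=
    (h3.const_mul _).add t4
  have t2 : Integrable (fun x => c2 * u2 x + (c3 * u3 x + (c4 * u4 x + (c5 * u5 x + c0)))) P :=
    (h2.const_mul _).add t3
  rw [integral_add (h1.const_mul _) t2, integral_add (h2.const_mul _) t3,
    integral_add (h3.const_mul _) t4, integral_add (h4.const_mul _) t5,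
    integral_add (h5.const_mul _) (integrable_const _), integral_const,
    integral_const_mul, integral_const_mul, integral_const_mul, integral_const_mul,
    integral_const_mul]
  simp

set_option maxHeartbeats 1000000 in
/-- second moment of the balancing weights and the bias bound.  The signed
measure `R*` with `dR*/dP = 1 + (μ/2)(f* − E_P[f*])` is encoded by this density `wstar`,
so `∫ f dR* = ∫ f·wstar dP`.  With `δ := E_Q[f*] − E_P[f*] − (μ/2)·Var_P[f*]`:
`∫ (dR*/dP)² dP = 1 + (E_Q[f*] − E_P[f*] − δ)²/Var_P[f*]`; moreover if `f*` maximizes the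
dual objective over a convex symmetric `F ⊆ L²(P) ∩ L¹(Q)`, then every `f₀ ∈ F` has bias
at most `δ`. -/
theorem stmt_5 {X : Type*} [MeasurableSpace X] (P Q : Measure X)
    [IsProbabilityMeasure P] [IsProbabilityMeasure Q]
    (μ : ℝ) (hμ : 0 < μ)
    (fstar : X → ℝ) (hfstar2 : MemLp fstar 2 P) (hfstarQ : Integrable fstar Q)
    (EPf EQf VarPf : ℝ)
    (hEPf : EPf = ∫ x, fstar x ∂P) (hEQf : EQf = ∫ x, fstar x ∂Q)
    (hVarPf : VarPf = (∫ x, (fstar x) ^ 2 ∂P) - EPf ^ 2) (hVarpos : 0 < VarPf)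
    (wstar : X → ℝ) (hwstar : wstar = fun x => 1 + (μ / 2) * (fstar x - EPf))
    (δ : ℝ) (hδ : δ = EQf - EPf - (μ / 2) * VarPf) :
    -- second moment of the weights
    (∫ x, (wstar x) ^ 2 ∂P) = 1 + (EQf - EPf - δ) ^ 2 / VarPf ∧
    -- bias bound over the outcome class
    (∀ F : Set (X → ℝ), Convex ℝ F →
      (∀ f ∈ F, MemLp f 2 P ∧ Integrable f Q) →
      (∀ f ∈ F, -f ∈ F) →
      fstar ∈ F →
      (∀ f ∈ F, (∫ x, f x ∂Q) - (∫ x, f x ∂P)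
          - (μ / 4) * ((∫ x, (f x) ^ 2 ∂P) - (∫ x, f x ∂P) ^ 2)
        ≤ EQf - EPf - (μ / 4) * VarPf) →
      ∀ f₀ ∈ F, |(∫ x, f₀ x ∂Q) - ∫ x, f₀ x * wstar x ∂P| ≤ δ) := by
  have hVne : VarPf ≠ 0 := ne_of_gt hVarpos
  have ifP : Integrable fstar P := hfstar2.integrable one_le_two
  have ifsq : Integrable (fun x => (fstar x) ^ 2) P := hfstar2.integrable_sq
  have haP : (∫ x, fstar x ∂P) = EPf := hEPf.symm
  constructor
  · -- second moment
    have e : (fun x => (1 + (μ / 2) * (fstar x - EPf)) ^ 2)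
        = fun x => ((μ/2)^2) * (fstar x)^2 + ((2*(μ/2)*(1 - (μ/2)*EPf)) * (fstar x)
          + ((0:ℝ) * (fstar x) + ((0:ℝ) * (fstar x) + ((0:ℝ) * (fstar x)
          + (1 - (μ/2)*EPf)^2)))) := funext fun x => by ring
    rw [hwstar]
    simp only []
    rw [e, my_integral_comb P _ _ _ _ _ ifsq ifP ifP ifP ifP, haP]
    have hb : (∫ x, (fstar x)^2 ∂P) = VarPf + EPf^2 := by rw [hVarPf]; ring
    rw [hb, hδ]
    field_simp
    ring
  · -- bias bound
    intro F hconv hF hsym hfF hmax f₀ hf₀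
    obtain ⟨hf₀2, hf₀Q⟩ := hF f₀ hf₀
    have if0P : Integrable f₀ P := hf₀2.integrable one_le_two
    -- key: for every g ∈ F, the "bias functional" of g is at most δ
    have key : ∀ g, g ∈ F → (∫ x, g x ∂Q) - (∫ x, g x ∂P)
        - (μ/2) * ((∫ x, fstar x * g x ∂P) - EPf * (∫ x, g x ∂P)) ≤ δ := by
      intro g hg
      obtain ⟨hg2, hgQ⟩ := hF g hg
      have igP : Integrable g P := hg2.integrable one_le_two
      have igsq : Integrable (fun x => (g x) ^ 2) P := hg2.integrable_sq
      have igprod : Integrable (fun x => fstar x * g x) P := my_integrable_mul hfstar2 hg2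
      set a := ∫ x, fstar x ∂P with ha
      set aQ := ∫ x, fstar x ∂Q with haQ
      set b := ∫ x, (fstar x)^2 ∂P with hb
      set gQ := ∫ x, g x ∂Q with hgQd
      set gP := ∫ x, g x ∂P with hgPd
      set gsq := ∫ x, (g x)^2 ∂P with hgsqd
      set m := ∫ x, fstar x * g x ∂P with hm
      clear_value a aQ b gQ gP gsq m
      -- variance of g - fstar is nonnegative
      have hV : 0 ≤ gsq - 2*m + b - (gP - a)^2 := by
        have h1 : (0:ℝ) ≤ ∫ x, (g x - fstar x - (gP - a))^2 ∂P :=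
          integral_nonneg fun x => sq_nonneg _
        have e : (fun x => (g x - fstar x - (gP - a))^2)
            = fun x => (1:ℝ) * (g x)^2 + ((-2:ℝ) * (fstar x * g x) + ((1:ℝ) * (fstar x)^2
              + ((-2*(gP - a)) * (g x) + ((2*(gP - a)) * (fstar x) + (gP - a)^2)))) :=
          funext fun x => by ring
        have h2 := my_integral_comb P _ _ _ _ _ igsq igprod ifsq igP ifP
          (1:ℝ) (-2) 1 (-2*(gP - a)) (2*(gP - a)) ((gP - a)^2)
        rw [← e] at h2
        rw [h2] at h1
        rw [← hgsqd, ← hm, ← hb, ← hgPd, ← ha] at h1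
        linarith [h1]
      set V := gsq - 2*m + b - (gP - a)^2 with hVdef
      set C := (μ/4) * V with hCdef
      clear_value V C
      have hC0 : 0 ≤ C := by rw [hCdef]; exact mul_nonneg (by positivity) hV
      -- the goal, rewritten in the set variables
      rw [hδ, hEQf, hVarPf, hEPf]
      -- suffices to show ≤ δ0 + ε for all ε > 0
      refine le_of_forall_pos_le_add ?_
      intro ε hε
      set t := min 1 (ε / (C + 1)) with htdef
      clear_value t
      have ht0 : 0 < t := htdef ▸ lt_min one_pos (div_pos hε (by linarith))
      have ht1 : t ≤ 1 := htdef ▸ min_le_left _ _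
      have hmem : (fun x => (1 - t) * fstar x + t * g x) ∈ F := by
        have h := hconv hfF hg (by linarith : (0:ℝ) ≤ 1 - t) (le_of_lt ht0)
          (by ring : (1 - t) + t = 1)
        exact h
      have hineq := hmax _ hmem
      have hQt : ∫ x, ((1 - t) * fstar x + t * g x) ∂Q = (1 - t) * aQ + t * gQ := by
        rw [integral_add (hfstarQ.const_mul _) (hgQ.const_mul _), integral_const_mul,
          integral_const_mul, ← haQ, ← hgQd]
      have hPt : ∫ x, ((1 - t) * fstar x + t * g x) ∂P = (1 - t) * a + t * gP := by
        rw [integral_add (ifP.const_mul _) (igP.const_mul _), integral_const_mul,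
          integral_const_mul, ← ha, ← hgPd]
      have hsqt : ∫ x, ((1 - t) * fstar x + t * g x)^2 ∂P
          = (1 - t)^2 * b + 2*(1 - t)*t * m + t^2 * gsq := by
        have e : (fun x => ((1 - t) * fstar x + t * g x)^2)
            = fun x => ((1 - t)^2) * (fstar x)^2 + ((2*(1 - t)*t) * (fstar x * g x)
              + ((t^2) * (g x)^2 + ((0:ℝ) * (g x) + ((0:ℝ) * (fstar x) + (0:ℝ))))) :=
          funext fun x => by ring
        rw [e, my_integral_comb P _ _ _ _ _ ifsq igprod igsq igP ifP, ← hb, ← hm, ← hgsqd]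
        ring
      rw [hQt, hPt, hsqt, hEQf, hVarPf, hEPf] at hineq
      -- algebraic rearrangement of hineq
      have hid : ((1 - t) * aQ + t * gQ) - ((1 - t) * a + t * gP)
          - (μ/4) * (((1 - t)^2 * b + 2*(1 - t)*t * m + t^2 * gsq) - ((1 - t) * a + t * gP)^2)
          = (aQ - a - (μ/4) * (b - a^2))
            + (t * ((gQ - gP - (μ/2) * (m - a * gP)) - (aQ - a - (μ/2) * (b - a^2)))
              - (μ/4) * V * t^2) := by
        rw [hVdef]; ring
      have hstep : t * ((gQ - gP - (μ/2) * (m - a * gP)) - (aQ - a - (μ/2) * (b - a^2)))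
          ≤ t * (C * t) := by
        have h3 : t * ((gQ - gP - (μ/2) * (m - a * gP)) - (aQ - a - (μ/2) * (b - a^2)))
            ≤ (μ/4) * V * t^2 := by linarith [hineq, hid]
        have h4 : t * (C * t) = (μ/4) * V * t^2 := by rw [hCdef]; ring
        linarith
      have hD : (gQ - gP - (μ/2) * (m - a * gP)) - (aQ - a - (μ/2) * (b - a^2)) ≤ C * t :=
        le_of_mul_le_mul_left hstep ht0
      have hte : t ≤ ε / (C + 1) := htdef ▸ min_le_right _ _
      have hCt : C * t ≤ ε := by
        have h1 : C * t ≤ C * (ε / (C + 1)) := mul_le_mul_of_nonneg_left hte hC0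
        have hCp : (0:ℝ) < C + 1 := by linarith
        have h2 : C * (ε / (C + 1)) ≤ ε := by
          rw [mul_div_assoc', div_le_iff₀ hCp]
          nlinarith [hε.le, hC0]
        linarith
      linarith
    -- apply key to f₀ and -f₀
    have h1 := key f₀ hf₀
    have h2 := key (-f₀) (hsym f₀ hf₀)
    have hnegQ : ∫ x, (-f₀) x ∂Q = -(∫ x, f₀ x ∂Q) := by simp [integral_neg]
    have hnegP : ∫ x, (-f₀) x ∂P = -(∫ x, f₀ x ∂P) := by simp [integral_neg]
    have hnegprod : ∫ x, fstar x * (-f₀) x ∂P = -(∫ x, fstar x * f₀ x ∂P) := by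
      simp [mul_neg, integral_neg]
    rw [hnegQ, hnegP, hnegprod] at h2
    -- rewrite the bias with wstar
    have hw : ∫ x, f₀ x * wstar x ∂P = (∫ x, f₀ x ∂P)
        + (μ/2) * ((∫ x, fstar x * f₀ x ∂P) - EPf * (∫ x, f₀ x ∂P)) := by
      have iprod : Integrable (fun x => fstar x * f₀ x) P := my_integrable_mul hfstar2 hf₀2
      simp only [hwstar]
      have e : (fun x => f₀ x * (1 + μ / 2 * (fstar x - EPf)))
          = fun x => ((1 - (μ/2) * EPf)) * (f₀ x) + ((μ/2) * (fstar x * f₀ x)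
            + ((0:ℝ) * (f₀ x) + ((0:ℝ) * (f₀ x) + ((0:ℝ) * (f₀ x) + (0:ℝ))))) :=
        funext fun x => by ring
      rw [e, my_integral_comb P _ _ _ _ _ if0P iprod if0P if0P if0P]
      ring
    rw [hw, abs_le]
    constructor <;> linarith
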